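/- arXiv:math/0611019 — 2 statements merged into one kernel-verified Lean document; each statement's English description precedes it below -/
import Mathlib

section
/- The map Exp from the set of formal vector fields on C^2 of order ≥ 2 to the group of formal diffeomorphisms of C^2 tangent to the identity, defined by Exp(X) = (exp X(x), exp X(y)), is a bijection. -/
open Finsupp

noncomputable section

abbrev F2 : Type := MvPowerSeries (Fin 2) ℂ

/-- total degree of a monomial exponent -/
def deg (d : Fin 2 →₀ ℕ) : ℕ := d 0 + d 1

/-- the exponent (m, n) -/
def idx (m n : ℕ) : Fin 2 →₀ ℕ := Finsupp.single 0 m + Finsupp.single 1 n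

/-- partial derivative of a formal power series -/
def pd (i : Fin 2) (f : F2) : F2 :=
  fun d => ((d i : ℂ) + 1) * MvPowerSeries.coeff (d + Finsupp.single i 1) f

/-- the derivation a ∂/∂x + b ∂/∂y applied to g -/
def vf (a b g : F2) : F2 := a * pd 0 g + b * pd 1 g

/-- `ordGE f k` : the order ν(f) is at least k -/
def ordGE (f : F2) (k : ℕ) : Prop :=
  ∀ d : Fin 2 →₀ ℕ, deg d < k → MvPowerSeries.coeff d f = 0

/-- exp X (g) = Σ_j (1/j!) X^j(g), coefficientwise -/
def expX (a b g : F2) : F2 :=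
  fun d => ∑' j : ℕ, ((j.factorial : ℂ))⁻¹ * MvPowerSeries.coeff d ((vf a b)^[j] g)

/-- degree-k homogeneous part -/
def HT (k : ℕ) (f : F2) : F2 :=
  fun d => if deg d = k then MvPowerSeries.coeff d f else 0

/-- substitution y := x·v :  f(x, xv), in coordinates (x, v) -/
def blowup (f : F2) : F2 :=
  fun d => if d 1 ≤ d 0 then MvPowerSeries.coeff (idx (d 0 - d 1) (d 1)) f else 0

/-- `dehom k f` = f_k(1, v), where f_k is the degree-k homogeneous part of f -/
def dehom (k : ℕ) (f : F2) : F2 :=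
  fun d => if d 0 = 0 ∧ d 1 ≤ k then MvPowerSeries.coeff (idx (k - d 1) (d 1)) f else 0

/-- evaluation of the degree-k homogeneous part of f at (1, v0) -/
def evk (k : ℕ) (v0 : ℂ) (f : F2) : ℂ :=
  ∑ n ∈ Finset.range (k+1), MvPowerSeries.coeff (idx (k-n) n) f * v0 ^ n

/-- the linear change of coordinates f(x, y) ↦ f(x, y + v0·x) -/
def shear (v0 : ℂ) (f : F2) : F2 :=
  fun d => ∑ j ∈ Finset.range (deg d + 1),
    if d 1 ≤ j ∧ j - d 1 ≤ d 0 then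
      (j.choose (d 1) : ℂ) * v0 ^ (j - d 1) *
        MvPowerSeries.coeff (idx (d 0 - (j - d 1)) j) f
    else 0

/-- the coordinate x -/
def Xv : F2 := MvPowerSeries.X 0
/-- the coordinate y (alias v in the blow-up chart) -/
def Yv : F2 := MvPowerSeries.X 1

end

noncomputable section

lemma cf (d : Fin 2 →₀ ℕ) (f : F2) : MvPowerSeries.coeff d f = f d := rfl

lemma deg_add (u v : Fin 2 →₀ ℕ) : deg (u + v) = deg u + deg v := by
  simp [deg, Finsupp.add_apply]; ring

lemma deg_single (i : Fin 2) : deg (Finsupp.single i 1) = 1 := by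
  fin_cases i <;> simp [deg, Finsupp.single_apply]

lemma ordGE_mul {f g : F2} {m n : ℕ} (hf : ordGE f m) (hg : ordGE g n) :
    ordGE (f * g) (m + n) := by
  intro d hd
  rw [MvPowerSeries.coeff_mul]
  apply Finset.sum_eq_zero
  intro x hx
  rw [Finset.HasAntidiagonal.mem_antidiagonal] at hx
  have hdeg : deg x.1 + deg x.2 = deg d := by rw [← deg_add, hx]
  rcases lt_or_ge (deg x.1) m with h | h
  · exact mul_eq_zero_of_left (hf x.1 h) _
  · exact mul_eq_zero_of_right _ (hg x.2 (by omega))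

lemma ordGE_pd {g : F2} {k : ℕ} (i : Fin 2) (hg : ordGE g (k + 1)) :
    ordGE (pd i g) k := by
  intro d hd
  have : deg (d + Finsupp.single i 1) < k + 1 := by
    rw [deg_add, deg_single]; omega
  rw [cf]
  show ((d i : ℂ) + 1) * MvPowerSeries.coeff (d + Finsupp.single i 1) g = 0
  rw [hg _ this, mul_zero]

lemma ordGE_vf {a b g : F2} {k : ℕ} (ha : ordGE a 2) (hb : ordGE b 2)
    (hg : ordGE g (k + 1)) : ordGE (vf a b g) (k + 2) := by
  intro d hd
  have h1 : ordGE (a * pd 0 g) (2 + k) := ordGE_mul ha (ordGE_pd 0 hg)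
  have h2 : ordGE (b * pd 1 g) (2 + k) := ordGE_mul hb (ordGE_pd 1 hg)
  rw [vf, map_add, h1 d (by omega), h2 d (by omega), add_zero]

lemma ordGE_iter {a b g : F2} (ha : ordGE a 2) (hb : ordGE b 2)
    (hg : ordGE g 1) (j : ℕ) : ordGE ((vf a b)^[j] g) (j + 1) := by
  induction j with
  | zero => simpa using hg
  | succ n ih =>
    rw [Function.iterate_succ_apply']
    exact ordGE_vf ha hb ih

lemma ordGE_Xv : ordGE Xv 1 := by
  intro d hd
  rw [Xv, MvPowerSeries.coeff_X]
  split
  · next h => subst h; rw [deg_single] at hd; omega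
  · rfl

lemma ordGE_Yv : ordGE Yv 1 := by
  intro d hd
  rw [Yv, MvPowerSeries.coeff_X]
  split
  · next h => subst h; rw [deg_single] at hd; omega
  · rfl


lemma pd_X_same (i : Fin 2) : pd i (MvPowerSeries.X i) = 1 := by
  funext d
  show ((d i : ℂ) + 1) * MvPowerSeries.coeff (d + Finsupp.single i 1) (MvPowerSeries.X i)
      = MvPowerSeries.coeff d (1 : F2)
  rw [MvPowerSeries.coeff_X, MvPowerSeries.coeff_one]
  by_cases h : d = 0
  · subst h; simp
  · have h2 : d + Finsupp.single i 1 ≠ Finsupp.single i 1 := by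
      intro he
      apply h
      have := add_right_cancel (a := d) (b := Finsupp.single i 1) (c := 0)
      apply this
      rw [zero_add]; exact he
    rw [if_neg h2, if_neg h, mul_zero]

lemma pd_X_other {i j : Fin 2} (hij : i ≠ j) : pd i (MvPowerSeries.X j) = 0 := by
  funext d
  show ((d i : ℂ) + 1) * MvPowerSeries.coeff (d + Finsupp.single i 1) (MvPowerSeries.X j)
      = (0 : F2) d
  rw [MvPowerSeries.coeff_X]
  have h2 : d + Finsupp.single i 1 ≠ Finsupp.single j 1 := by
    intro he
    have := congrArg (fun m => m i) he
    simp [Finsupp.single_apply, hij, (Ne.symm hij)] at this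
  rw [if_neg h2, mul_zero]; rfl

lemma vf_Xv (a b : F2) : vf a b Xv = a := by
  rw [vf, Xv, pd_X_same, pd_X_other (by decide : (1:Fin 2) ≠ 0), mul_one, mul_zero, add_zero]

lemma vf_Yv (a b : F2) : vf a b Yv = b := by
  rw [vf, Yv, pd_X_same, pd_X_other (by decide : (0:Fin 2) ≠ 1), mul_zero, mul_one, zero_add]


/-- Key dependence lemma: the degree-≤ M+j-1 coefficients of `(vf a b)^[j] g` depend
only on the degree-≤ M coefficients of `a` and `b`. -/
lemma iter_agree {a b a' b' g : F2} (ha : ordGE a 2) (hb : ordGE b 2)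
    (ha' : ordGE a' 2) (hb' : ordGE b' 2) (hg : ordGE g 1) {M : ℕ}
    (hA : ∀ e : Fin 2 →₀ ℕ, deg e ≤ M → a e = a' e)
    (hB : ∀ e : Fin 2 →₀ ℕ, deg e ≤ M → b e = b' e) :
    ∀ j : ℕ, 1 ≤ j → ∀ d : Fin 2 →₀ ℕ, deg d + 1 ≤ M + j →
      ((vf a b)^[j] g) d = ((vf a' b')^[j] g) d := by
  intro j
  induction j with
  | zero => omega
  | succ n ih =>
    intro _ d hd
    have expand : ∀ (u v h : F2) (e : Fin 2 →₀ ℕ), (vf u v h) e =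
        ∑ x ∈ Finset.HasAntidiagonal.antidiagonal e,
          (u x.1 * (pd 0 h) x.2 + v x.1 * (pd 1 h) x.2) := by
      intro u v h e
      show MvPowerSeries.coeff e (u * pd 0 h + v * pd 1 h) = _
      rw [map_add, MvPowerSeries.coeff_mul, MvPowerSeries.coeff_mul, ← Finset.sum_add_distrib]
      rfl
    rcases Nat.eq_or_lt_of_le (Nat.one_le_iff_ne_zero.mpr (Nat.succ_ne_zero n)) with h1 | h1
    · -- base case j = 1
      have hn : n = 0 := by omega
      subst hn
      rw [Function.iterate_one, Function.iterate_one, expand, expand]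
      apply Finset.sum_congr rfl
      intro x hx
      rw [Finset.HasAntidiagonal.mem_antidiagonal] at hx
      have hdeg : deg x.1 + deg x.2 = deg d := by rw [← deg_add, hx]
      have hu : deg x.1 ≤ M := by omega
      rw [hA x.1 hu, hB x.1 hu]
    · -- inductive step: n ≥ 1
      have hn : 1 ≤ n := by omega
      set h := (vf a b)^[n] g with hh
      set h' := (vf a' b')^[n] g with hh'
      have hordh : ordGE h (n + 1) := ordGE_iter ha hb hg n
      have hordh' : ordGE h' (n + 1) := ordGE_iter ha' hb' hg n
      rw [Function.iterate_succ_apply', Function.iterate_succ_apply', expand, expand]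
      apply Finset.sum_congr rfl
      intro x hx
      rw [Finset.HasAntidiagonal.mem_antidiagonal] at hx
      have hdeg : deg x.1 + deg x.2 = deg d := by rw [← deg_add, hx]
      by_cases hu2 : deg x.1 < 2
      · rw [show a x.1 = 0 from ha x.1 hu2, show a' x.1 = 0 from ha' x.1 hu2,
          show b x.1 = 0 from hb x.1 hu2, show b' x.1 = 0 from hb' x.1 hu2]
        simp
      · by_cases hv : deg x.2 < n
        · have e0 : deg (x.2 + Finsupp.single 0 1) < n + 1 := by
            rw [deg_add, deg_single]; omega
          have e1 : deg (x.2 + Finsupp.single 1 1) < n + 1 := by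
            rw [deg_add, deg_single]; omega
          show a x.1 * (((x.2 0 : ℂ) + 1) * MvPowerSeries.coeff (x.2 + Finsupp.single 0 1) h)
              + b x.1 * (((x.2 1 : ℂ) + 1) * MvPowerSeries.coeff (x.2 + Finsupp.single 1 1) h)
              = a' x.1 * (((x.2 0 : ℂ) + 1) * MvPowerSeries.coeff (x.2 + Finsupp.single 0 1) h')
              + b' x.1 * (((x.2 1 : ℂ) + 1) * MvPowerSeries.coeff (x.2 + Finsupp.single 1 1) h')
          rw [hordh _ e0, hordh _ e1, hordh' _ e0, hordh' _ e1]
          simp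
        · -- deg x.1 ≥ 2, deg x.2 ≥ n
          have hu : deg x.1 ≤ M := by omega
          have i0 : deg (x.2 + Finsupp.single 0 1) + 1 ≤ M + n := by
            rw [deg_add, deg_single]; omega
          have i1 : deg (x.2 + Finsupp.single 1 1) + 1 ≤ M + n := by
            rw [deg_add, deg_single]; omega
          show a x.1 * (((x.2 0 : ℂ) + 1) * h (x.2 + Finsupp.single 0 1))
              + b x.1 * (((x.2 1 : ℂ) + 1) * h (x.2 + Finsupp.single 1 1))
              = a' x.1 * (((x.2 0 : ℂ) + 1) * h' (x.2 + Finsupp.single 0 1))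
              + b' x.1 * (((x.2 1 : ℂ) + 1) * h' (x.2 + Finsupp.single 1 1))
          rw [hA x.1 hu, hB x.1 hu, ih hn _ i0, ih hn _ i1]


/-- Master formula: coefficient of `expX a b g` where `vf a b g = c`. -/
lemma master {a b g c : F2} (ha : ordGE a 2) (hb : ordGE b 2) (hg : ordGE g 1)
    (hc : vf a b g = c) (hc2 : ordGE c 2) (d : Fin 2 →₀ ℕ) :
    (expX a b g) d = g d + c d +
      ∑ j ∈ Finset.Ico 2 (deg d), ((j.factorial : ℂ))⁻¹ * ((vf a b)^[j] g) d := by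
  have hiter := ordGE_iter ha hb hg
  have hsum : (expX a b g) d =
      ∑ j ∈ Finset.range (deg d), ((j.factorial : ℂ))⁻¹ * ((vf a b)^[j] g) d := by
    show (∑' j : ℕ, ((j.factorial : ℂ))⁻¹ * MvPowerSeries.coeff d ((vf a b)^[j] g)) = _
    exact tsum_eq_sum (by
      intro j hj
      rw [Finset.mem_range, not_lt] at hj
      rw [hiter j d (by omega), mul_zero])
  rw [hsum]
  rcases Nat.lt_or_ge (deg d) 1 with h0 | h0
  · have hd0 : deg d = 0 := by omega
    rw [hd0]
    simp only [Finset.range_zero, Finset.sum_empty]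
    rw [show g d = 0 from hg d (by omega), show c d = 0 from hc2 d (by omega)]
    simp
  rcases Nat.lt_or_ge (deg d) 2 with h1 | h1
  · have hd1 : deg d = 1 := by omega
    rw [hd1]
    rw [show (Finset.range 1) = {0} from rfl, Finset.sum_singleton]
    rw [show c d = 0 from hc2 d (by omega)]
    simp [Function.iterate_zero]
  · rw [Finset.range_eq_Ico,
      Finset.sum_eq_sum_Ico_succ_bot (by omega : 0 < deg d),
      Finset.sum_eq_sum_Ico_succ_bot (by omega : 1 < deg d)]
    rw [Function.iterate_zero, Function.iterate_one, hc]
    simp [Nat.factorial]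
    ring

/-- residual sum for the x-component -/
def EX (a b : F2) : (Fin 2 →₀ ℕ) → ℂ := fun d =>
  ∑ j ∈ Finset.Ico 2 (deg d), ((j.factorial : ℂ))⁻¹ * ((vf a b)^[j] Xv) d

/-- residual sum for the y-component -/
def EY (a b : F2) : (Fin 2 →₀ ℕ) → ℂ := fun d =>
  ∑ j ∈ Finset.Ico 2 (deg d), ((j.factorial : ℂ))⁻¹ * ((vf a b)^[j] Yv) d

/-- successive approximations to the solution vector field -/
def T (p q : F2) : ℕ → F2 × F2
  | 0 => (0, 0)
  | N + 1 => ((fun d => p d - EX (T p q N).1 (T p q N).2 d : F2),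
              (fun d => q d - EY (T p q N).1 (T p q N).2 d : F2))

lemma ordGE_T (p q : F2) (hp : ordGE p 2) (hq : ordGE q 2) (N : ℕ) :
    ordGE (T p q N).1 2 ∧ ordGE (T p q N).2 2 := by
  cases N with
  | zero =>
    constructor <;> · intro d _; exact map_zero _
  | succ n =>
    have hempty : ∀ d : Fin 2 →₀ ℕ, deg d < 2 → Finset.Ico 2 (deg d) = ∅ := by
      intro d hd; apply Finset.Ico_eq_empty; omega
    constructor
    · intro d hd
      show p d - EX (T p q n).1 (T p q n).2 d = (0 : ℂ)
      rw [show EX (T p q n).1 (T p q n).2 d = 0 by rw [EX, hempty d hd]; simp,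
        show p d = 0 from hp d hd, sub_zero]
    · intro d hd
      show q d - EY (T p q n).1 (T p q n).2 d = (0 : ℂ)
      rw [show EY (T p q n).1 (T p q n).2 d = 0 by rw [EY, hempty d hd]; simp,
        show q d = 0 from hq d hd, sub_zero]

lemma consec_T (p q : F2) (hp : ordGE p 2) (hq : ordGE q 2) (N : ℕ) :
    ∀ e : Fin 2 →₀ ℕ, deg e ≤ N →
      (T p q N).1 e = (T p q (N+1)).1 e ∧ (T p q N).2 e = (T p q (N+1)).2 e := by
  induction N with
  | zero =>
    intro e he
    have he0 : deg e = 0 := by omega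
    have hE : Finset.Ico 2 (deg e) = ∅ := by rw [he0]; rfl
    constructor
    · show (0 : ℂ) = p e - EX 0 0 e
      rw [EX, hE, Finset.sum_empty, show p e = 0 from hp e (by omega), sub_zero]
    · show (0 : ℂ) = q e - EY 0 0 e
      rw [EY, hE, Finset.sum_empty, show q e = 0 from hq e (by omega), sub_zero]
  | succ n ih =>
    intro e he
    have h1 := (ordGE_T p q hp hq n).1
    have h2 := (ordGE_T p q hp hq n).2
    have h1' := (ordGE_T p q hp hq (n+1)).1
    have h2' := (ordGE_T p q hp hq (n+1)).2
    have hsame : ∀ j ∈ Finset.Ico 2 (deg e),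
        ∀ g : F2, ordGE g 1 →
        ((vf (T p q n).1 (T p q n).2)^[j] g) e
          = ((vf (T p q (n+1)).1 (T p q (n+1)).2)^[j] g) e := by
      intro j hj g hg
      rw [Finset.mem_Ico] at hj
      exact iter_agree h1 h2 h1' h2' hg
        (fun x hx => (ih x hx).1)
        (fun x hx => (ih x hx).2)
        j (by omega) e (by omega)
    constructor
    · show p e - EX (T p q n).1 (T p q n).2 e = p e - EX (T p q (n+1)).1 (T p q (n+1)).2 e
      congr 1
      rw [EX, EX]
      exact Finset.sum_congr rfl (fun j hj => by rw [hsame j hj Xv ordGE_Xv])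
    · show q e - EY (T p q n).1 (T p q n).2 e = q e - EY (T p q (n+1)).1 (T p q (n+1)).2 e
      congr 1
      rw [EY, EY]
      exact Finset.sum_congr rfl (fun j hj => by rw [hsame j hj Yv ordGE_Yv])

lemma agree_T (p q : F2) (hp : ordGE p 2) (hq : ordGE q 2) {K L : ℕ} (hKL : K ≤ L) :
    ∀ e : Fin 2 →₀ ℕ, deg e ≤ K →
      (T p q K).1 e = (T p q L).1 e ∧ (T p q K).2 e = (T p q L).2 e := by
  induction L, hKL using Nat.le_induction with
  | base => intro e _; exact ⟨rfl, rfl⟩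
  | succ n hn ih =>
    intro e he
    have h1 := consec_T p q hp hq n e (by omega)
    exact ⟨(ih e he).1.trans h1.1, (ih e he).2.trans h1.2⟩


/-- the x-component of the solution vector field -/
def AX (p q : F2) : F2 := fun d => (T p q (deg d + 1)).1 d
/-- the y-component of the solution vector field -/
def BY (p q : F2) : F2 := fun d => (T p q (deg d + 1)).2 d

lemma AB_eq_T (p q : F2) (hp : ordGE p 2) (hq : ordGE q 2) {N : ℕ} (e : Fin 2 →₀ ℕ)
    (he : deg e ≤ N) : AX p q e = (T p q (N+1)).1 e ∧ BY p q e = (T p q (N+1)).2 e :=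
  agree_T p q hp hq (by omega : deg e + 1 ≤ N + 1) e (by omega)

lemma ordGE_AB (p q : F2) (hp : ordGE p 2) (hq : ordGE q 2) :
    ordGE (AX p q) 2 ∧ ordGE (BY p q) 2 :=
  ⟨fun d hd => (ordGE_T p q hp hq (deg d + 1)).1 d hd,
   fun d hd => (ordGE_T p q hp hq (deg d + 1)).2 d hd⟩

lemma fix_AB (p q : F2) (hp : ordGE p 2) (hq : ordGE q 2) (d : Fin 2 →₀ ℕ) :
    AX p q d = p d - EX (AX p q) (BY p q) d ∧
    BY p q d = q d - EY (AX p q) (BY p q) d := by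
  have hstep : AX p q d = p d - EX (T p q (deg d)).1 (T p q (deg d)).2 d ∧
      BY p q d = q d - EY (T p q (deg d)).1 (T p q (deg d)).2 d := by
    constructor
    · show (T p q (deg d + 1)).1 d = _
      rfl
    · show (T p q (deg d + 1)).2 d = _
      rfl
  have hsum : EX (T p q (deg d)).1 (T p q (deg d)).2 d = EX (AX p q) (BY p q) d ∧
      EY (T p q (deg d)).1 (T p q (deg d)).2 d = EY (AX p q) (BY p q) d := by
    rcases Nat.lt_or_ge (deg d) 3 with h3 | h3
    · have hE : Finset.Ico 2 (deg d) = ∅ := Finset.Ico_eq_empty (by omega)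
      constructor
      · show EX _ _ d = EX _ _ d
        rw [EX, EX, hE]; simp
      · show EY _ _ d = EY _ _ d
        rw [EY, EY, hE]; simp
    · obtain ⟨M, hM⟩ : ∃ M, deg d = M + 1 := ⟨deg d - 1, by omega⟩
      have hagree : ∀ e : Fin 2 →₀ ℕ, deg e ≤ M →
          (T p q (deg d)).1 e = AX p q e ∧ (T p q (deg d)).2 e = BY p q e := by
        intro e he
        have := AB_eq_T p q hp hq (N := M) e he
        rw [← hM] at this
        exact ⟨this.1.symm, this.2.symm⟩
      have key : ∀ j ∈ Finset.Ico 2 (deg d), ∀ g : F2, ordGE g 1 →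
          ((vf (T p q (deg d)).1 (T p q (deg d)).2)^[j] g) d
            = ((vf (AX p q) (BY p q))^[j] g) d := by
        intro j hj g hg
        rw [Finset.mem_Ico] at hj
        exact iter_agree (ordGE_T p q hp hq (deg d)).1 (ordGE_T p q hp hq (deg d)).2
          (ordGE_AB p q hp hq).1 (ordGE_AB p q hp hq).2 hg
          (fun e he => (hagree e he).1) (fun e he => (hagree e he).2)
          j (by omega) d (by omega)
      constructor
      · exact Finset.sum_congr rfl (fun j hj => by rw [key j hj Xv ordGE_Xv])
      · exact Finset.sum_congr rfl (fun j hj => by rw [key j hj Yv ordGE_Yv])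
  exact ⟨hstep.1.trans (by rw [hsum.1]), hstep.2.trans (by rw [hsum.2])⟩


lemma eq_iff_X {p a b : F2} (ha : ordGE a 2) (hb : ordGE b 2) :
    expX a b Xv = Xv + p ↔ ∀ d, a d = p d - EX a b d := by
  refine (funext_iff (β := fun _ => ℂ)).trans ?_
  constructor
  · intro h d
    have h2 : Xv d + a d + ∑ j ∈ Finset.Ico 2 (deg d),
        ((j.factorial : ℂ))⁻¹ * ((vf a b)^[j] Xv) d = Xv d + p d := by
      rw [← master ha hb ordGE_Xv (vf_Xv a b) ha d]
      exact (h d).trans (map_add (MvPowerSeries.coeff d) Xv p)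
    rw [show EX a b d = ∑ j ∈ Finset.Ico 2 (deg d),
        ((j.factorial : ℂ))⁻¹ * ((vf a b)^[j] Xv) d from rfl]
    linear_combination h2
  · intro h d
    have h2 : (expX a b Xv) d = Xv d + a d + EX a b d :=
      master ha hb ordGE_Xv (vf_Xv a b) ha d
    rw [h2, h d]
    have : (Xv + p) d = Xv d + p d := map_add (MvPowerSeries.coeff d) Xv p
    rw [this]
    ring

lemma eq_iff_Y {q a b : F2} (ha : ordGE a 2) (hb : ordGE b 2) :
    expX a b Yv = Yv + q ↔ ∀ d, b d = q d - EY a b d := by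
  refine (funext_iff (β := fun _ => ℂ)).trans ?_
  constructor
  · intro h d
    have h2 : Yv d + b d + ∑ j ∈ Finset.Ico 2 (deg d),
        ((j.factorial : ℂ))⁻¹ * ((vf a b)^[j] Yv) d = Yv d + q d := by
      rw [← master ha hb ordGE_Yv (vf_Yv a b) hb d]
      exact (h d).trans (map_add (MvPowerSeries.coeff d) Yv q)
    rw [show EY a b d = ∑ j ∈ Finset.Ico 2 (deg d),
        ((j.factorial : ℂ))⁻¹ * ((vf a b)^[j] Yv) d from rfl]
    linear_combination h2
  · intro h d
    have h2 : (expX a b Yv) d = Yv d + b d + EY a b d :=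
      master ha hb ordGE_Yv (vf_Yv a b) hb d
    rw [h2, h d]
    have : (Yv + q) d = Yv d + q d := map_add (MvPowerSeries.coeff d) Yv q
    rw [this]
    ring

/-- Exp is a bijection from vector fields of order ≥ 2 onto tangent-to-identity
formal diffeomorphisms: every G = (x+p, y+q) with ν(p), ν(q) ≥ 2 has a unique preimage. -/
theorem Exp_bijective (p q : F2) (hp : ordGE p 2) (hq : ordGE q 2) :
    ∃! X : {ab : F2 × F2 // ordGE ab.1 2 ∧ ordGE ab.2 2},
      expX X.val.1 X.val.2 Xv = Xv + p ∧ expX X.val.1 X.val.2 Yv = Yv + q := by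
  obtain ⟨hA2, hB2⟩ := ordGE_AB p q hp hq
  refine ⟨⟨(AX p q, BY p q), hA2, hB2⟩, ⟨?_, ?_⟩, ?_⟩
  · exact (eq_iff_X hA2 hB2).mpr (fun d => (fix_AB p q hp hq d).1)
  · exact (eq_iff_Y hA2 hB2).mpr (fun d => (fix_AB p q hp hq d).2)
  · rintro ⟨⟨a, b⟩, ha2, hb2⟩ ⟨h1, h2⟩
    simp only at ha2 hb2 h1 h2
    have ea := (eq_iff_X (p := p) ha2 hb2).mp h1
    have eb := (eq_iff_Y (q := q) ha2 hb2).mp h2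
    have key : ∀ n : ℕ, ∀ d : Fin 2 →₀ ℕ, deg d ≤ n →
        a d = AX p q d ∧ b d = BY p q d := by
      intro n
      induction n with
      | zero =>
        intro d hd
        exact ⟨(ha2 d (by omega)).trans (hA2 d (by omega)).symm,
               (hb2 d (by omega)).trans (hB2 d (by omega)).symm⟩
      | succ n ih =>
        intro d hd
        have hEE : EX a b d = EX (AX p q) (BY p q) d ∧
            EY a b d = EY (AX p q) (BY p q) d := by
          have keyj : ∀ j ∈ Finset.Ico 2 (deg d), ∀ g : F2, ordGE g 1 →
              ((vf a b)^[j] g) d = ((vf (AX p q) (BY p q))^[j] g) d := by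
            intro j hj g hg
            rw [Finset.mem_Ico] at hj
            exact iter_agree ha2 hb2 hA2 hB2 hg
              (fun e he => (ih e he).1) (fun e he => (ih e he).2)
              j (by omega) d (by omega)
          constructor
          · exact Finset.sum_congr rfl (fun j hj => by rw [keyj j hj Xv ordGE_Xv])
          · exact Finset.sum_congr rfl (fun j hj => by rw [keyj j hj Yv ordGE_Yv])
        constructor
        · rw [ea d, (fix_AB p q hp hq d).1, hEE.1]
        · rw [eb d, (fix_AB p q hp hq d).2, hEE.2]
    apply Subtype.ext
    show (a, b) = (AX p q, BY p q)
    have h1' : a = AX p q := funext (fun d => (key (deg d) d le_rfl).1)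
    have h2' : b = BY p q := funext (fun d => (key (deg d) d le_rfl).2)
    rw [h1', h2']

end
end

section
/- Let G = (x + Σ_{n≥2} p_n, y + Σ_{n≥2} q_n) be a formal diffeomorphism tangent to the identity (p_n, q_n homogeneous of degree n). Define recursively homogeneous vector fields by: a_{m+1} = p_{m+1} − HT_{m+1}(Σ_{j=2}^{m} (1/j!) X_m^j(x)) and b_{m+1} = q_{m+1} − HT_{m+1}(Σ_{j=2}^{m} (1/j!) X_m^j(y)), where X_m = Σ_{n=2}^{m} (a_n ∂/∂x + b_n ∂/∂y) and HT_{m+1} takes the homogeneous part of degree m+1. Then X = Σ_{n≥2}(a_n ∂/∂x + b_n ∂/∂y) is the unique formal vector field of order ≥ 2 with Exp(X) = G. -/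
open Finsupp

noncomputable section

/-- reassemble a sequence of homogeneous pieces into a power series -/
noncomputable def totalize (a : ℕ → F2) : F2 :=
  fun d => MvPowerSeries.coeff d (a (deg d))

namespace IG
open MvPowerSeries

lemma coeff_def (f : F2) (d : Fin 2 →₀ ℕ) : coeff d f = f d := rfl

lemma deg_add (d e : Fin 2 →₀ ℕ) : deg (d + e) = deg d + deg e := by
  simp [deg, Finsupp.add_apply]; ring

lemma ordGE_mono {f : F2} {k l : ℕ} (h : ordGE f k) (hlk : l ≤ k) : ordGE f l :=
  fun d hd => h d (lt_of_lt_of_le hd hlk)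

lemma ordGE_zero (k : ℕ) : ordGE 0 k := fun d _ => by simp

lemma ordGE_sub {f g : F2} {k : ℕ} (hf : ordGE f k) (hg : ordGE g k) : ordGE (f - g) k :=
  fun d hd => by rw [map_sub, hf d hd, hg d hd, sub_zero]

lemma ordGE_add {f g : F2} {k : ℕ} (hf : ordGE f k) (hg : ordGE g k) : ordGE (f + g) k :=
  fun d hd => by rw [map_add, hf d hd, hg d hd, add_zero]

lemma ordGE_pd {g : F2} {k : ℕ} (hg : ordGE g k) (i : Fin 2) : ordGE (pd i g) (k - 1) := by
  intro d hd
  show ((d i : ℂ) + 1) * coeff (d + Finsupp.single i 1) g = 0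
  rw [hg, mul_zero]
  have : deg (Finsupp.single i 1) = 1 := by
    fin_cases i <;> simp [deg, Finsupp.single_apply]
  rw [deg_add, this]; omega

lemma ordGE_mul {f g : F2} {k l : ℕ} (hf : ordGE f k) (hg : ordGE g l) :
    ordGE (f * g) (k + l) := by
  intro d hd
  rw [MvPowerSeries.coeff_mul]
  apply Finset.sum_eq_zero
  intro p hp
  rw [Finset.HasAntidiagonal.mem_antidiagonal] at hp
  have hdeg : deg p.1 + deg p.2 = deg d := by rw [← deg_add, hp]
  rcases lt_or_ge (deg p.1) k with h | h
  · rw [hf p.1 h, zero_mul]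
  · rw [hg p.2 (by omega), mul_zero]

lemma ordGE_vf {A B g : F2} {k : ℕ} (hA : ordGE A 2) (hB : ordGE B 2) (hg : ordGE g k) :
    ordGE (vf A B g) (k + 1) := by
  have h1 : ordGE (A * pd 0 g) (2 + (k - 1)) := ordGE_mul hA (ordGE_pd hg 0)
  have h2 : ordGE (B * pd 1 g) (2 + (k - 1)) := ordGE_mul hB (ordGE_pd hg 1)
  exact ordGE_add (ordGE_mono h1 (by omega)) (ordGE_mono h2 (by omega))

lemma ordGE_iter {A B g : F2} {k : ℕ} (hA : ordGE A 2) (hB : ordGE B 2) (hg : ordGE g k)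
    (j : ℕ) : ordGE ((vf A B)^[j] g) (k + j) := by
  induction j with
  | zero => simpa using hg
  | succ n ih =>
    rw [Function.iterate_succ_apply']
    exact ordGE_mono (ordGE_vf hA hB ih) (by omega)

lemma pd_sub (i : Fin 2) (f g : F2) : pd i (f - g) = pd i f - pd i g := by
  funext d
  show _ * coeff _ (f - g) = (_ * _ : ℂ) - _ * _
  rw [map_sub]; ring

lemma vf_sub_right (A B g h : F2) : vf A B (g - h) = vf A B g - vf A B h := by
  simp only [vf, pd_sub]; ring

lemma vf_sub_left (A A' B B' g : F2) :
    vf A B g - vf A' B' g = vf (A - A') (B - B') g := by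
  simp only [vf]; ring


/-- truncation lemma: iterates only depend on low-degree coefficients -/
lemma iter_trunc {A A' B B' g : F2} {t k : ℕ}
    (hA : ordGE A 2) (hB : ordGE B 2) (hA' : ordGE A' 2) (hB' : ordGE B' 2)
    (hdA : ordGE (A - A') t) (hdB : ordGE (B - B') t) (hg : ordGE g k) :
    ∀ j, 1 ≤ j → ordGE ((vf A B)^[j] g - (vf A' B')^[j] g) (t + k + j - 2) := by
  intro j hj
  induction j with
  | zero => omega
  | succ n ih =>
    rcases Nat.eq_or_lt_of_le hj with h1 | h1
    · -- n + 1 = 1, i.e. n = 0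
      have hn : n = 0 := by omega
      subst hn
      simp only [Function.iterate_succ_apply', Function.iterate_zero_apply]
      rw [vf_sub_left]
      have h1 : ordGE ((A - A') * pd 0 g) (t + (k - 1)) := ordGE_mul hdA (ordGE_pd hg 0)
      have h2 : ordGE ((B - B') * pd 1 g) (t + (k - 1)) := ordGE_mul hdB (ordGE_pd hg 1)
      exact ordGE_mono (ordGE_add h1 h2) (by omega)
    · have hn : 1 ≤ n := by omega
      have ihn := ih hn
      rw [Function.iterate_succ_apply', Function.iterate_succ_apply']
      have key : (vf A B) ((vf A B)^[n] g) - (vf A' B') ((vf A' B')^[n] g)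
          = vf A B ((vf A B)^[n] g - (vf A' B')^[n] g)
            + vf (A - A') (B - B') ((vf A' B')^[n] g) := by
        rw [vf_sub_right, ← vf_sub_left]; ring
      rw [key]
      have o1 : ordGE (vf A B ((vf A B)^[n] g - (vf A' B')^[n] g)) (t + k + n - 2 + 1) :=
        ordGE_vf hA hB ihn
      have hXn : ordGE ((vf A' B')^[n] g) (k + n) := ordGE_iter hA' hB' hg n
      have o2 : ordGE (vf (A - A') (B - B') ((vf A' B')^[n] g)) (t + (k + n - 1)) := by
        have h1 : ordGE ((A - A') * pd 0 ((vf A' B')^[n] g)) (t + (k + n - 1)) :=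
          ordGE_mul hdA (ordGE_pd hXn 0)
        have h2 : ordGE ((B - B') * pd 1 ((vf A' B')^[n] g)) (t + (k + n - 1)) :=
          ordGE_mul hdB (ordGE_pd hXn 1)
        exact ordGE_add h1 h2
      exact ordGE_add (ordGE_mono o1 (by omega)) (ordGE_mono o2 (by omega))

lemma deg_single (i : Fin 2) : deg (Finsupp.single i 1) = 1 := by
  fin_cases i <;> simp [deg, Finsupp.single_apply]

lemma pd_X (i j : Fin 2) : pd i (MvPowerSeries.X j : F2) = if i = j then 1 else 0 := by
  funext d
  show ((d i : ℂ) + 1) * coeff (d + Finsupp.single i 1) (MvPowerSeries.X j) = _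
  rw [MvPowerSeries.coeff_X]
  by_cases h : i = j
  · subst h
    rw [if_pos rfl]
    show _ = coeff d (1 : F2)
    rw [MvPowerSeries.coeff_one]
    by_cases hd : d = 0
    · subst hd; simp
    · have hne : ¬ (d + Finsupp.single i 1 = Finsupp.single i 1) := by
        simpa using hd
      rw [if_neg hne, mul_zero, if_neg hd]
  · have hne : ¬ (d + Finsupp.single i 1 = Finsupp.single j 1) := by
      intro hh
      have := congrArg (fun e : Fin 2 →₀ ℕ => e i) hh
      simp [Finsupp.single_apply, Ne.symm h] at this
    rw [if_neg hne, mul_zero, if_neg h]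
    rfl

lemma vf_Xv (A B : F2) : vf A B Xv = A := by
  simp [vf, Xv, pd_X, Fin.ext_iff]

lemma vf_Yv (A B : F2) : vf A B Yv = B := by
  simp [vf, Yv, pd_X, Fin.ext_iff]

lemma coeff_X_ne {i : Fin 2} {d : Fin 2 →₀ ℕ} (h : deg d ≠ 1) :
    coeff d (MvPowerSeries.X i : F2) = 0 := by
  rw [MvPowerSeries.coeff_X, if_neg]
  intro hh; subst hh; exact h (deg_single i)

lemma ordGE_X (i : Fin 2) : ordGE (MvPowerSeries.X i : F2) 1 :=
  fun d hd => coeff_X_ne (by omega)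


lemma expX_coeff {A B g : F2} (hA : ordGE A 2) (hB : ordGE B 2) (hg : ordGE g 1)
    (d : Fin 2 →₀ ℕ) :
    coeff d (expX A B g) =
      ∑ j ∈ Finset.range (deg d + 1),
        ((j.factorial : ℂ))⁻¹ * coeff d ((vf A B)^[j] g) := by
  show (∑' j : ℕ, ((j.factorial : ℂ))⁻¹ * coeff d ((vf A B)^[j] g)) = _
  apply tsum_eq_sum
  intro j hj
  rw [Finset.mem_range, not_lt] at hj
  rw [ordGE_iter hA hB hg j d (by omega), mul_zero]

lemma coeff_HT (k : ℕ) (f : F2) (d : Fin 2 →₀ ℕ) :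
    coeff d (HT k f) = if deg d = k then coeff d f else 0 := rfl

lemma coeff_totalize (a : ℕ → F2) (d : Fin 2 →₀ ℕ) :
    coeff d (totalize a) = coeff d (a (deg d)) := rfl

lemma coeff_truncHT (A : F2) (m : ℕ) (d : Fin 2 →₀ ℕ) :
    coeff d (∑ n ∈ Finset.Icc 2 m, HT n A)
      = if deg d ∈ Finset.Icc 2 m then coeff d A else 0 := by
  rw [map_sum]
  simp only [coeff_HT]
  rw [Finset.sum_ite_eq (Finset.Icc 2 m) (deg d) (fun _ => coeff d A)]

lemma ordGE_truncHT {A : F2} (m : ℕ) : ordGE (∑ n ∈ Finset.Icc 2 m, HT n A) 2 := by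
  intro d hd
  rw [coeff_truncHT, if_neg]
  simp only [Finset.mem_Icc]; omega

lemma ordGE_sub_truncHT {A : F2} (hA : ordGE A 2) (m : ℕ) :
    ordGE (A - ∑ n ∈ Finset.Icc 2 m, HT n A) (m + 1) := by
  intro d hd
  rw [map_sub, coeff_truncHT]
  by_cases h : deg d ∈ Finset.Icc 2 m
  · rw [if_pos h, sub_self]
  · rw [if_neg h, sub_zero]
    apply hA
    simp only [Finset.mem_Icc] at h; omega

/-- the key coefficient computation at degree m+1 -/
lemma key {A B g : F2} (C : F2)
    (hA : ordGE A 2) (hB : ordGE B 2)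
    (hghom : ∀ d : Fin 2 →₀ ℕ, deg d ≠ 1 → coeff d g = 0)
    (hC : vf A B g = C)
    (m : ℕ) (hm : 1 ≤ m) (d : Fin 2 →₀ ℕ) (hd : deg d = m + 1) :
    coeff d (expX A B g) = coeff d C +
      coeff d (∑ j ∈ Finset.Icc 2 m, ((j.factorial : ℂ))⁻¹ •
        (vf (∑ n ∈ Finset.Icc 2 m, HT n A) (∑ n ∈ Finset.Icc 2 m, HT n B))^[j] g) := by
  have hg : ordGE g 1 := fun e he => hghom e (by omega)
  set Am := ∑ n ∈ Finset.Icc 2 m, HT n A with hAm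
  set Bm := ∑ n ∈ Finset.Icc 2 m, HT n B with hBm
  have hAm2 : ordGE Am 2 := ordGE_truncHT m
  have hBm2 : ordGE Bm 2 := ordGE_truncHT m
  rw [expX_coeff hA hB hg d, hd]
  have hsplit : Finset.range (m + 1 + 1) = insert 0 (insert 1 (Finset.Icc 2 (m+1))) := by
    ext j
    simp only [Finset.mem_range, Finset.mem_insert, Finset.mem_Icc]
    omega
  rw [hsplit, Finset.sum_insert (by simp), Finset.sum_insert (by simp)]
  have h0 : ((Nat.factorial 0 : ℂ))⁻¹ * coeff d ((vf A B)^[0] g) = 0 := by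
    simp only [Function.iterate_zero_apply]
    rw [hghom d (by omega), mul_zero]
  have h1 : ((Nat.factorial 1 : ℂ))⁻¹ * coeff d ((vf A B)^[1] g) = coeff d C := by
    rw [Function.iterate_one, hC]
    simp
  rw [h0, h1, zero_add]
  congr 1
  have hIcc : Finset.Icc 2 (m+1) = insert (m+1) (Finset.Icc 2 m) := by
    ext j
    simp only [Finset.mem_insert, Finset.mem_Icc]
    omega
  rw [hIcc, Finset.sum_insert (by simp)]
  have htop : ((Nat.factorial (m+1) : ℂ))⁻¹ * coeff d ((vf A B)^[m+1] g) = 0 := by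
    rw [ordGE_iter hA hB hg (m+1) d (by omega), mul_zero]
  rw [htop, zero_add, map_sum]
  apply Finset.sum_congr rfl
  intro j hj
  rw [Finset.mem_Icc] at hj
  rw [LinearMap.map_smul, smul_eq_mul]
  congr 1
  have hdiff := iter_trunc hA hB hAm2 hBm2
    (ordGE_sub_truncHT hA m) (ordGE_sub_truncHT hB m) hg j (by omega)
  have := hdiff d (by omega)
  rw [map_sub] at this
  exact sub_eq_zero.mp this


lemma expX_low {A B g : F2} (hA : ordGE A 2) (hB : ordGE B 2)
    (hghom : ∀ d : Fin 2 →₀ ℕ, deg d ≠ 1 → coeff d g = 0)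
    (d : Fin 2 →₀ ℕ) (hd : deg d < 2) :
    coeff d (expX A B g) = coeff d g := by
  have hg : ordGE g 1 := fun e he => hghom e (by omega)
  rw [expX_coeff hA hB hg]
  rcases (by omega : deg d = 0 ∨ deg d = 1) with h | h <;> rw [h]
  · simp
  · rw [Finset.sum_range_succ, Finset.sum_range_one]
    have h1 : coeff d (vf A B g) = 0 :=
      ordGE_vf hA hB hg d (by omega)
    simp [h1]

lemma coeff_Xv_ne {d : Fin 2 →₀ ℕ} (h : deg d ≠ 1) : coeff d Xv = 0 := coeff_X_ne h
lemma coeff_Yv_ne {d : Fin 2 →₀ ℕ} (h : deg d ≠ 1) : coeff d Yv = 0 := coeff_X_ne h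

lemma ordGE_totalize {a : ℕ → F2} (ha01 : ∀ n < 2, a n = 0) : ordGE (totalize a) 2 :=
  fun d hd => by rw [coeff_totalize, ha01 _ hd, map_zero]

lemma sum_a_eq {a : ℕ → F2}
    (hahom : ∀ n, ∀ d : Fin 2 →₀ ℕ, deg d ≠ n → coeff d (a n) = 0) (m : ℕ) :
    ∑ n ∈ Finset.Icc 2 m, a n = ∑ n ∈ Finset.Icc 2 m, HT n (totalize a) := by
  apply MvPowerSeries.ext
  intro d
  rw [map_sum, coeff_truncHT]
  by_cases h : deg d ∈ Finset.Icc 2 m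
  · rw [if_pos h, coeff_totalize]
    rw [Finset.sum_eq_single_of_mem (deg d) h]
    intro n _ hne
    exact hahom n d (fun hh => hne hh.symm)
  · rw [if_neg h]
    apply Finset.sum_eq_zero
    intro n hn
    apply hahom n d
    intro hh
    exact h (hh ▸ hn)


lemma HT_eq_zero {f : F2} (hf : ordGE f 2) {n : ℕ} (hn : n < 2) : HT n f = 0 := by
  apply MvPowerSeries.ext
  intro d
  rw [coeff_HT, map_zero]
  by_cases h : deg d = n
  · rw [if_pos h]; exact hf d (by omega)
  · rw [if_neg h]

end IG
/-- the recursion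
a_{m+1} = p_{m+1} - HT_{m+1}(Σ_{j=2}^m (1/j!) X_m^j(x)),
b_{m+1} = q_{m+1} - HT_{m+1}(Σ_{j=2}^m (1/j!) X_m^j(y)),
with X_m = Σ_{n=2}^m (a_n ∂/∂x + b_n ∂/∂y), produces the unique formal vector field X of
order ≥ 2 with Exp(X) = G = (x + p, y + q): the infinitesimal generator of G. -/
theorem infinitesimal_generator (p q : F2) (hp : ordGE p 2) (hq : ordGE q 2)
    (a b : ℕ → F2)
    (hahom : ∀ n, ∀ d : Fin 2 →₀ ℕ, deg d ≠ n → MvPowerSeries.coeff d (a n) = 0)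
    (hbhom : ∀ n, ∀ d : Fin 2 →₀ ℕ, deg d ≠ n → MvPowerSeries.coeff d (b n) = 0)
    (ha01 : ∀ n < 2, a n = 0) (hb01 : ∀ n < 2, b n = 0)
    (hrec : ∀ m ≥ 1,
      a (m + 1) = HT (m + 1) p -
        HT (m + 1) (∑ j ∈ Finset.Icc 2 m, ((j.factorial : ℂ))⁻¹ •
          (vf (∑ n ∈ Finset.Icc 2 m, a n) (∑ n ∈ Finset.Icc 2 m, b n))^[j] Xv) ∧
      b (m + 1) = HT (m + 1) q -
        HT (m + 1) (∑ j ∈ Finset.Icc 2 m, ((j.factorial : ℂ))⁻¹ •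
          (vf (∑ n ∈ Finset.Icc 2 m, a n) (∑ n ∈ Finset.Icc 2 m, b n))^[j] Yv)) :
    ordGE (totalize a) 2 ∧ ordGE (totalize b) 2 ∧
    expX (totalize a) (totalize b) Xv = Xv + p ∧
    expX (totalize a) (totalize b) Yv = Yv + q ∧
    (∀ a' b' : F2, ordGE a' 2 → ordGE b' 2 →
      expX a' b' Xv = Xv + p → expX a' b' Yv = Yv + q →
      a' = totalize a ∧ b' = totalize b) := by
  classical
  have hXhom : ∀ d : Fin 2 →₀ ℕ, deg d ≠ 1 → MvPowerSeries.coeff d Xv = 0 :=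
    fun d h => IG.coeff_Xv_ne h
  have hYhom : ∀ d : Fin 2 →₀ ℕ, deg d ≠ 1 → MvPowerSeries.coeff d Yv = 0 :=
    fun d h => IG.coeff_Yv_ne h
  have hAt2 : ordGE (totalize a) 2 := IG.ordGE_totalize ha01
  have hBt2 : ordGE (totalize b) 2 := IG.ordGE_totalize hb01
  refine ⟨hAt2, hBt2, ?_, ?_, ?_⟩
  · apply MvPowerSeries.ext
    intro d
    rcases lt_or_ge (deg d) 2 with hdl | hdg
    · rw [IG.expX_low hAt2 hBt2 hXhom d hdl, map_add, hp d hdl, add_zero]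
    · obtain ⟨m, hm, hd⟩ : ∃ m, 1 ≤ m ∧ deg d = m + 1 := ⟨deg d - 1, by omega, by omega⟩
      have hk := IG.key (totalize a) hAt2 hBt2 hXhom (IG.vf_Xv _ _) m hm d hd
      rw [hk, map_add, IG.coeff_Xv_ne (by omega), zero_add]
      have hr := (hrec m hm).1
      rw [IG.sum_a_eq hahom m, IG.sum_a_eq hbhom m] at hr
      have hcoefA : MvPowerSeries.coeff d (totalize a)
          = MvPowerSeries.coeff d (a (m+1)) := by
        rw [IG.coeff_totalize, hd]
      rw [hcoefA, hr, map_sub, IG.coeff_HT, IG.coeff_HT, if_pos hd, if_pos hd]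
      ring
  · apply MvPowerSeries.ext
    intro d
    rcases lt_or_ge (deg d) 2 with hdl | hdg
    · rw [IG.expX_low hAt2 hBt2 hYhom d hdl, map_add, hq d hdl, add_zero]
    · obtain ⟨m, hm, hd⟩ : ∃ m, 1 ≤ m ∧ deg d = m + 1 := ⟨deg d - 1, by omega, by omega⟩
      have hk := IG.key (totalize b) hAt2 hBt2 hYhom (IG.vf_Yv _ _) m hm d hd
      rw [hk, map_add, IG.coeff_Yv_ne (by omega), zero_add]
      have hr := (hrec m hm).2
      rw [IG.sum_a_eq hahom m, IG.sum_a_eq hbhom m] at hr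
      have hcoefB : MvPowerSeries.coeff d (totalize b)
          = MvPowerSeries.coeff d (b (m+1)) := by
        rw [IG.coeff_totalize, hd]
      rw [hcoefB, hr, map_sub, IG.coeff_HT, IG.coeff_HT, if_pos hd, if_pos hd]
      ring
  · intro a' b' ha' hb' hea heb
    have hmain : ∀ n, a n = HT n a' ∧ b n = HT n b' := by
      intro n
      induction n using Nat.strong_induction_on with
      | _ n ih =>
        rcases lt_or_ge n 2 with hn | hn
        · rw [ha01 n hn, hb01 n hn, IG.HT_eq_zero ha' hn, IG.HT_eq_zero hb' hn]
          exact ⟨rfl, rfl⟩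
        · obtain ⟨m, hm, rfl⟩ : ∃ m, 1 ≤ m ∧ n = m + 1 := ⟨n - 1, by omega, by omega⟩
          have hsa : ∑ k ∈ Finset.Icc 2 m, a k = ∑ k ∈ Finset.Icc 2 m, HT k a' :=
            Finset.sum_congr rfl
              (fun k hk => (ih k (by rw [Finset.mem_Icc] at hk; omega)).1)
          have hsb : ∑ k ∈ Finset.Icc 2 m, b k = ∑ k ∈ Finset.Icc 2 m, HT k b' :=
            Finset.sum_congr rfl
              (fun k hk => (ih k (by rw [Finset.mem_Icc] at hk; omega)).2)
          have hr := hrec m hm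
          rw [hsa, hsb] at hr
          constructor
          · apply MvPowerSeries.ext
            intro d
            rw [IG.coeff_HT]
            by_cases hdm : deg d = m + 1
            · rw [if_pos hdm, hr.1, map_sub, IG.coeff_HT, IG.coeff_HT,
                if_pos hdm, if_pos hdm]
              have hk := IG.key a' ha' hb' hXhom (IG.vf_Xv _ _) m hm d hdm
              rw [hea, map_add, IG.coeff_Xv_ne (by omega), zero_add] at hk
              rw [hk]; ring
            · rw [if_neg hdm]; exact hahom (m+1) d hdm
          · apply MvPowerSeries.ext
            intro d
            rw [IG.coeff_HT]
            by_cases hdm : deg d = m + 1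
            · rw [if_pos hdm, hr.2, map_sub, IG.coeff_HT, IG.coeff_HT,
                if_pos hdm, if_pos hdm]
              have hk := IG.key b' ha' hb' hYhom (IG.vf_Yv _ _) m hm d hdm
              rw [heb, map_add, IG.coeff_Yv_ne (by omega), zero_add] at hk
              rw [hk]; ring
            · rw [if_neg hdm]; exact hbhom (m+1) d hdm
    constructor
    · apply MvPowerSeries.ext
      intro d
      rw [IG.coeff_totalize, (hmain (deg d)).1, IG.coeff_HT, if_pos rfl]
    · apply MvPowerSeries.ext
      intro d
      rw [IG.coeff_totalize, (hmain (deg d)).2, IG.coeff_HT, if_pos rfl]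

end
end
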